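/- For all natural numbers p ≥ 1, s ≥ 1, and all x, the Fibonacci polynomial identity F_{2ps}(x) = F_s(x) · Σ_{k=0}^{p-1} (-1)^{sk} L_{(2p-2k-1)s}(x) holds. -/

import Mathlib

/-- Fibonacci polynomials evaluated at a real `x`. -/
def fibP : ℕ → ℝ → ℝ
  | 0, _ => 0
  | 1, _ => 1
  | n + 2, x => x * fibP (n + 1) x + fibP n x

/-- Lucas polynomials evaluated at a real `x`. -/
def lucasP : ℕ → ℝ → ℝ
  | 0, _ => 2
  | 1, x => x
  | n + 2, x => x * lucasP (n + 1) x + lucasP n x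

lemma fibP_add_two (n : ℕ) (x : ℝ) : fibP (n + 2) x = x * fibP (n + 1) x + fibP n x := rfl

lemma lucasP_add_two (n : ℕ) (x : ℝ) : lucasP (n + 2) x = x * lucasP (n + 1) x + lucasP n x := rfl

/-- Addition formula. -/
lemma fibP_add (x : ℝ) (m n : ℕ) :
    fibP (m + n + 1) x = fibP (m + 1) x * fibP (n + 1) x + fibP m x * fibP n x := by
  induction n using Nat.twoStepInduction with
  | zero => simp [fibP]
  | one => simp [fibP, fibP_add_two]; ring
  | more n ih1 ih2 =>
    have h : m + (n + 2) + 1 = (m + n + 1) + 2 := by ring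
    rw [h, fibP_add_two, fibP_add_two n, fibP_add_two (n+1)]
    have h2 : m + n + 1 + 1 = m + (n+1) + 1 := by ring
    rw [h2, ih2, ih1]
    ring

/-- Lucas in terms of Fibonacci. -/
lemma lucasP_eq (x : ℝ) (n : ℕ) : lucasP (n + 1) x = fibP (n + 2) x + fibP n x := by
  induction n using Nat.twoStepInduction with
  | zero => simp [fibP, lucasP]
  | one => simp [fibP, lucasP]; ring
  | more n ih1 ih2 =>
    rw [show n + 2 + 1 = (n + 1) + 2 from rfl, lucasP_add_two, ih1, ih2,
      show n + 2 + 2 = (n + 2) + 2 from rfl, fibP_add_two (n+2), fibP_add_two n]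
    ring

/-- Cassini's identity. -/
lemma fibP_cassini (x : ℝ) (n : ℕ) :
    fibP (n + 1) x * fibP (n + 1) x - fibP (n + 2) x * fibP n x = (-1 : ℝ) ^ n := by
  induction n with
  | zero => simp [fibP]
  | succ n ih =>
    rw [fibP_add_two (n+1), fibP_add_two n, pow_succ]
    linear_combination -ih - fibP n x * fibP_add_two n x

/-- Doubling: F_{2n} = F_n L_n (stated for n+1). -/
lemma fibP_double (x : ℝ) (n : ℕ) :
    fibP (2 * (n + 1)) x = fibP (n + 1) x * lucasP (n + 1) x := by
  have h := fibP_add x n (n + 1)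
  rw [show n + (n+1) + 1 = 2 * (n+1) by ring] at h
  rw [h, lucasP_eq]
  ring

/-- F_{2n+1} = F_n L_{n+1} + (-1)^n. -/
lemma fibP_double_add_one (x : ℝ) (n : ℕ) :
    fibP (2 * n + 1) x = fibP n x * lucasP (n + 1) x + (-1 : ℝ) ^ n := by
  have h := fibP_add x n n
  rw [show n + n + 1 = 2 * n + 1 by ring] at h
  rw [h, lucasP_eq]
  have hc := fibP_cassini x n
  nlinarith [hc]

/-- Key identity: F_n · L_{k+n} = F_{k+2n} - (-1)^n F_k. -/
lemma key (x : ℝ) (n k : ℕ) :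
    fibP n x * lucasP (k + n) x = fibP (k + 2 * n) x - (-1 : ℝ) ^ n * fibP k x := by
  induction k using Nat.twoStepInduction with
  | zero =>
    simp only [Nat.zero_add, fibP, mul_zero, sub_zero]
    cases n with
    | zero => simp [fibP]
    | succ m => rw [fibP_double]
  | one =>
    simp only [fibP]
    rw [show (1:ℕ) + n = n + 1 by ring, show (1:ℕ) + 2*n = 2*n + 1 by ring,
      fibP_double_add_one]
    ring
  | more k ih1 ih2 =>
    rw [show k + 2 + n = (k + n) + 2 by ring, show k + 2 + 2*n = (k + 2*n) + 2 by ring,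
      lucasP_add_two, fibP_add_two, fibP_add_two k,
      show k + n + 1 = (k+1) + n by ring, show k + 2*n + 1 = (k+1) + 2*n by ring]
    linear_combination x * ih2 + ih1

theorem stmt_1 (p s : ℕ) (hp : 1 ≤ p) (hs : 1 ≤ s) (x : ℝ) :
    fibP (2 * p * s) x =
      fibP s x *
        ∑ k ∈ Finset.range p, (-1 : ℝ) ^ (s * k) * lucasP ((2 * p - 2 * k - 1) * s) x := by
  clear hp hs
  induction p with
  | zero => simp [fibP]
  | succ p ih =>
    rw [Finset.sum_range_succ']
    have hsum : ∑ k ∈ Finset.range p,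
        (-1 : ℝ) ^ (s * (k+1)) * lucasP ((2 * (p+1) - 2 * (k+1) - 1) * s) x
        = (-1 : ℝ) ^ s *
          ∑ k ∈ Finset.range p, (-1 : ℝ) ^ (s * k) * lucasP ((2 * p - 2 * k - 1) * s) x := by
      rw [Finset.mul_sum]
      refine Finset.sum_congr rfl fun k hk => ?_
      have hk' : k < p := Finset.mem_range.mp hk
      have h1 : 2 * (p+1) - 2 * (k+1) - 1 = 2 * p - 2 * k - 1 := by omega
      rw [h1, Nat.mul_add, pow_add]
      ring
    rw [hsum]
    have hidx : (2 * (p+1) - 2 * 0 - 1) * s = 2 * p * s + s := by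
      have : 2 * (p+1) - 2 * 0 - 1 = 2 * p + 1 := by omega
      rw [this]; ring
    rw [hidx, Nat.mul_zero, pow_zero, one_mul]
    have hkey := key x s (2 * p * s)
    rw [show 2 * (p+1) * s = 2 * p * s + 2 * s by ring]
    linear_combination (-1:ℝ)^s * ih - hkey
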